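/- Let p̃ be a probability mass function on ℕ with finite support and s̃ the maximum of its support. Let L ≥ s̃ + 1 and let π̂^L minimize Ψ over ℳ^L. If π̂^L is a probability measure, i.e., ∑_{j=1}^{L} π̂^L_j = 1, then π̂^L minimizes Ψ over all of ℳ: Ψ(π̂^L) ≤ Ψ(π) for every π ∈ ℳ with finite support; equivalently, π̂^L equals the unique mixing measure π̂ of the constrained least squares estimator p̂, characterized by p̂(i) = ∑_{j≥i+1} π̂_j T_j(i) for all i ≥ 0. -/

import Mathlib

open scoped BigOperators

noncomputable section

/-- A discrete function `f : ℕ → ℝ` is convex if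
`f(i+1) - 2 f(i) + f(i-1) ≥ 0` for every `i ≥ 1`. -/
def ConvexNat (f : ℕ → ℝ) : Prop :=
  ∀ i : ℕ, 0 ≤ f (i + 2) - 2 * f (i + 1) + f i

/-- `𝒦`: convex, nonnegative functions on `ℕ` tending to `0` at infinity. -/
def MemK (f : ℕ → ℝ) : Prop :=
  ConvexNat f ∧ (∀ i, 0 ≤ f i) ∧ Filter.Tendsto f Filter.atTop (nhds 0)

/-- `𝒞`: elements of `𝒦` summing to one. -/
def MemC (f : ℕ → ℝ) : Prop := MemK f ∧ ∑' i, f i = 1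

/-- The least squares criterion `Q(f) = (1/2) ∑ f(i)² − ∑ f(i) p̃(i)`. -/
def Crit (ptil f : ℕ → ℝ) : ℝ :=
  (1 / 2) * ∑' i, (f i) ^ 2 - ∑' i, f i * ptil i

/-- A probability mass function on `ℕ` with finite support. -/
def IsFinPMF (p : ℕ → ℝ) : Prop :=
  (∀ i, 0 ≤ p i) ∧ (Function.support p).Finite ∧ ∑' i, p i = 1

/-- `s` is the maximum of the support of `p`. -/
def IsMaxSupport (p : ℕ → ℝ) (s : ℕ) : Prop :=
  p s ≠ 0 ∧ ∀ i, p i ≠ 0 → i ≤ s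

/-- The triangular function `T_j(i) = 2(j−i)/(j(j+1))` for `i < j`, `0` otherwise. -/
def Tri (j i : ℕ) : ℝ :=
  if i < j then 2 * ((j : ℝ) - (i : ℝ)) / ((j : ℝ) * ((j : ℝ) + 1)) else 0

/-- The mixture criterion
`Ψ(π) = (1/2) ∑_i (∑_{j≥i+1} π_j T_j(i))² − ∑_i p̃(i) ∑_{j≥i+1} π_j T_j(i)`
(recall `T_j(i) = 0` for `j ≤ i`). -/
def Psi (ptil : ℕ → ℝ) (π : ℕ → ℝ) : ℝ :=
  (1 / 2) * ∑' i : ℕ, (∑' j : ℕ, π j * Tri j i) ^ 2 -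
    ∑' i : ℕ, ptil i * ∑' j : ℕ, π j * Tri j i

/-- The directional derivative of `Ψ` at `μ` in the direction of the Dirac mass `δ_j`:
`d_j(Ψ)(μ) = ∑_{l=0}^{j−1} T_j(l) (∑_{j'≥l+1} μ_{j'} T_{j'}(l) − p̃(l))`. -/
def dPsi (ptil : ℕ → ℝ) (j : ℕ) (μ : ℕ → ℝ) : ℝ :=
  ∑ l ∈ Finset.range j, Tri j l * ((∑' j' : ℕ, μ j' * Tri j' l) - ptil l)

/-- `ℳ^L`: nonnegative measures on `ℕ∖{0}` supported in `{1,…,L}`. -/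
def MemML (L : ℕ) (π : ℕ → ℝ) : Prop :=
  π 0 = 0 ∧ (∀ j, 0 ≤ π j) ∧ ∀ j : ℕ, L < j → π j = 0

section AuxProof
open Finset

lemma tri_nonneg (j i : ℕ) : 0 ≤ Tri j i := by
  unfold Tri
  split
  · next h =>
    apply div_nonneg
    · have : (i:ℝ) ≤ j := by exact_mod_cast h.le
      linarith
    · positivity
  · exact le_refl 0

lemma tri_zero {j i : ℕ} (h : j ≤ i) : Tri j i = 0 := by
  unfold Tri; rw [if_neg (by omega)]

lemma tri_eq (j i : ℕ) (h : i < j) : Tri j i = 2 / ((j:ℝ) * (j+1)) * ((j:ℝ) - i) := by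
  unfold Tri; rw [if_pos h]; ring

lemma tri_convex (j : ℕ) : ConvexNat (Tri j) := by
  intro i
  rcases lt_trichotomy (i+2) j with h | h | h
  · rw [tri_eq j (i+2) h, tri_eq j (i+1) (by omega), tri_eq j i (by omega)]
    push_cast; ring_nf; rfl
  · have hj : (1:ℝ) ≤ (j:ℝ) := by exact_mod_cast (by omega : 1 ≤ j)
    have hje : (j:ℝ) = (i:ℝ) + 2 := by exact_mod_cast congrArg (Nat.cast : ℕ → ℝ) h.symm
    rw [tri_zero (by omega), tri_eq j (i+1) (by omega), tri_eq j i (by omega)]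
    have hpos : (0:ℝ) < (j:ℝ) * ((j:ℝ)+1) := by positivity
    push_cast
    rw [hje]
    have h1 : ((i:ℝ) + 2 - ((i:ℝ)+1)) = 1 := by ring
    have h2 : ((i:ℝ) + 2 - (i:ℝ)) = 2 := by ring
    rw [h1, h2]
    ring_nf
    exact le_refl 0
  · rcases lt_trichotomy (i+1) j with h1 | h1 | h1
    · omega
    · rw [tri_zero (by omega), tri_zero (by omega)]
      have := tri_nonneg j i
      linarith
    · rw [tri_zero (by omega), tri_zero (by omega), tri_zero (by omega)]
      norm_num

lemma gauss_sum (j : ℕ) : ∑ i ∈ range j, (i:ℝ) = (j:ℝ)*((j:ℝ)-1)/2 := by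
  induction j with
  | zero => simp
  | succ n ih => rw [Finset.sum_range_succ, ih]; push_cast; ring

lemma tri_sum {j : ℕ} (hj : 1 ≤ j) : ∑ i ∈ range j, Tri j i = 1 := by
  have hj1 : (1:ℝ) ≤ (j:ℝ) := by exact_mod_cast hj
  have hjj : (0:ℝ) < (j:ℝ) * ((j:ℝ)+1) := by positivity
  have : ∑ i ∈ range j, Tri j i = 2 / ((j:ℝ)*((j:ℝ)+1)) * ∑ i ∈ range j, ((j:ℝ) - i) := by
    rw [Finset.mul_sum]
    exact Finset.sum_congr rfl fun i hi => tri_eq j i (Finset.mem_range.mp hi)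
  rw [this]
  have hsum : ∑ i ∈ range j, ((j:ℝ) - i) = (j:ℝ)*((j:ℝ)+1)/2 := by
    rw [Finset.sum_sub_distrib, Finset.sum_const, gauss_sum, Finset.card_range]
    simp only [nsmul_eq_mul]
    ring
  rw [hsum]
  field_simp

lemma mix_convex (s : Finset ℕ) (μ : ℕ → ℝ) (hμ : ∀ j, 0 ≤ μ j) :
    ConvexNat (fun i => ∑ j ∈ s, μ j * Tri j i) := by
  intro i
  have key : (∑ j ∈ s, μ j * Tri j (i+2)) - 2*(∑ j ∈ s, μ j * Tri j (i+1)) + ∑ j ∈ s, μ j * Tri j i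
      = ∑ j ∈ s, (μ j * Tri j (i+2) - 2*(μ j * Tri j (i+1)) + μ j * Tri j i) := by
    rw [Finset.sum_add_distrib, Finset.sum_sub_distrib, Finset.mul_sum]
  simp only []
  rw [key]
  apply Finset.sum_nonneg
  intro j hj
  nlinarith [mul_nonneg (hμ j) (tri_convex j i)]

lemma mix_zero (s : Finset ℕ) (μ : ℕ → ℝ) {i : ℕ} (hi : s.sup id ≤ i) :
    (∑ j ∈ s, μ j * Tri j i) = 0 := by
  apply Finset.sum_eq_zero
  intro j hj
  have hji : j ≤ i := le_trans (by simpa using Finset.le_sup (f := id) hj) hi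
  rw [tri_zero hji, mul_zero]

lemma mix_memK (s : Finset ℕ) (μ : ℕ → ℝ) (hμ : ∀ j, 0 ≤ μ j) :
    MemK (fun i => ∑ j ∈ s, μ j * Tri j i) := by
  refine ⟨mix_convex s μ hμ, fun i => Finset.sum_nonneg fun j _ => mul_nonneg (hμ j) (tri_nonneg j i), ?_⟩
  apply Filter.Tendsto.congr' (f₁ := fun _ => (0:ℝ))
  · filter_upwards [Filter.eventually_ge_atTop (s.sup id)] with i hi
    exact (mix_zero s μ hi).symm
  · exact tendsto_const_nhds

lemma mix_sq_summable (s : Finset ℕ) (μ : ℕ → ℝ) :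
    Summable (fun i => (∑ j ∈ s, μ j * Tri j i) ^ 2) := by
  apply summable_of_ne_finset_zero (s := Finset.range (s.sup id + 1))
  intro i hi
  have hle : s.sup id ≤ i := by
    simp only [Finset.mem_range, not_lt] at hi; omega
  rw [mix_zero s μ hle]
  norm_num

lemma psi_eq_crit (ptil μ : ℕ → ℝ) (s : Finset ℕ) (h : ∀ j ∉ s, μ j = 0) :
    Psi ptil μ = Crit ptil (fun i => ∑ j ∈ s, μ j * Tri j i) := by
  have key : ∀ i, (∑' j, μ j * Tri j i) = ∑ j ∈ s, μ j * Tri j i :=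
    fun i => tsum_eq_sum (fun j hj => by rw [h j hj, zero_mul])
  unfold Psi Crit
  congr 1
  · congr 1
    exact tsum_congr fun i => by rw [key]
  · exact tsum_congr fun i => by rw [key, mul_comm]

lemma crit_eq_sum (ptil f : ℕ → ℝ) (N : ℕ) (hf : ∀ i, N ≤ i → f i = 0) :
    Crit ptil f = (1/2) * ∑ i ∈ range N, f i ^ 2 - ∑ i ∈ range N, f i * ptil i := by
  unfold Crit
  rw [tsum_eq_sum (s := range N) (fun i hi => by rw [hf i (le_of_not_gt (by simpa using hi))]; norm_num),
      tsum_eq_sum (s := range N) (fun i hi => by rw [hf i (le_of_not_gt (by simpa using hi)), zero_mul])]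

lemma memK_antitone {g : ℕ → ℝ} (hg : MemK g) : ∀ l, g (l+1) ≤ g l := by
  have mono : Monotone (fun m => g (m+1) - g m) :=
    monotone_nat_of_le_succ (fun n => show g (n+1) - g n ≤ g (n+1+1) - g (n+1) by have := hg.1 n; linarith)
  have h1 : Filter.Tendsto (fun m => g (m+1)) Filter.atTop (nhds 0) :=
    hg.2.2.comp (Filter.tendsto_add_atTop_nat 1)
  have hto : Filter.Tendsto (fun m => g (m+1) - g m) Filter.atTop (nhds 0) := by
    simpa using h1.sub hg.2.2
  intro l
  have h2 : g (l+1) - g l ≤ 0 := mono.ge_of_tendsto hto l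
  linarith

lemma abel_sum (a g : ℕ → ℝ) (N : ℕ) :
    ∑ l ∈ range N, a l * g l =
      (∑ l ∈ range N, a l) * g N - ∑ m ∈ range N, (∑ l ∈ range (m+1), a l) * (g (m+1) - g m) := by
  induction N with
  | zero => simp
  | succ n ih =>
    rw [Finset.sum_range_succ (fun l => a l * g l), ih,
        Finset.sum_range_succ (fun m => (∑ l ∈ range (m+1), a l) * (g (m+1) - g m)),
        Finset.sum_range_succ a]
    ring

lemma gsum_eq (h : ℕ → ℝ) (k : ℕ) :
    ∑ m ∈ range k, ∑ l ∈ range (m+1), h l = ∑ l ∈ range k, (((k:ℕ):ℝ) - l) * h l := by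
  induction k with
  | zero => simp
  | succ n ih =>
    rw [Finset.sum_range_succ, ih,
        Finset.sum_range_succ (fun l => (((n+1:ℕ):ℝ) - l) * h l),
        Finset.sum_range_succ h]
    have : ∑ l ∈ range n, (((n+1:ℕ):ℝ) - l) * h l
        = ∑ l ∈ range n, ((((n:ℕ):ℝ) - l) * h l + h l) := by
      apply Finset.sum_congr rfl
      intro l _
      push_cast
      ring
    rw [this, Finset.sum_add_distrib]
    push_cast
    ring

lemma key_ineq (h g : ℕ → ℝ) (L : ℕ) (hS : ∑ l ∈ range L, h l = 0)
    (hG : ∀ k, 0 ≤ ∑ m ∈ range k, ∑ l ∈ range (m+1), h l)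
    (hg : MemK g) : 0 ≤ ∑ l ∈ range L, h l * g l := by
  have hanti := memK_antitone hg
  have e1 := abel_sum h g L
  rw [hS, zero_mul, zero_sub] at e1
  have e3 := abel_sum (fun m => ∑ l ∈ range (m+1), h l) (fun m => g (m+1) - g m) L
  rw [e1, e3]
  have t1 : 0 ≤ ∑ m ∈ range L, ∑ l ∈ range (m+1), h l := hG L
  have t2 : g (L+1) - g L ≤ 0 := by have := hanti L; linarith
  have t3 : 0 ≤ ∑ k ∈ range L,
      (∑ m ∈ range (k+1), ∑ l ∈ range (m+1), h l) * ((g (k+1+1) - g (k+1)) - (g (k+1) - g k)) := by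
    apply Finset.sum_nonneg
    intro k _
    apply mul_nonneg (hG (k+1))
    have := hg.1 k
    linarith
  have t4 := mul_nonpos_of_nonneg_of_nonpos t1 t2
  linarith

lemma Fmin (ptil : ℕ → ℝ) (hpsum : ∑' i, ptil i = 1)
    (stil : ℕ) (hstil : IsMaxSupport ptil stil)
    (L : ℕ) (hL : stil + 1 ≤ L)
    (πhat : ℕ → ℝ) (hmem : MemML L πhat)
    (hmin : ∀ μ, MemML L μ → Psi ptil πhat ≤ Psi ptil μ)
    (hprob : ∑ j ∈ Finset.Icc 1 L, πhat j = 1) :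
    ∀ g : ℕ → ℝ, MemK g → Summable (fun i => g i ^ 2) →
      Crit ptil (fun i => ∑ j ∈ Finset.Icc 1 L, πhat j * Tri j i) ≤ Crit ptil g := by
  obtain ⟨hπ0, hπnn, hπz⟩ := hmem
  have hL1 : 1 ≤ L := by omega
  set F : ℕ → ℝ := fun i => ∑ j ∈ Finset.Icc 1 L, πhat j * Tri j i with hF
  -- ptil vanishes from L on
  have hpz : ∀ i, L ≤ i → ptil i = 0 := by
    intro i hi
    by_contra hne
    have := hstil.2 i hne
    omega
  -- F vanishes from L on
  have hFz : ∀ i, L ≤ i → F i = 0 := by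
    intro i hi
    apply Finset.sum_eq_zero
    intro j hj
    rw [tri_zero (le_trans (Finset.mem_Icc.mp hj).2 hi), mul_zero]
  -- πhat vanishes outside Icc 1 L
  have hπout : ∀ j ∉ Finset.Icc 1 L, πhat j = 0 := by
    intro j hj
    rw [Finset.mem_Icc] at hj
    rcases Nat.lt_or_ge L j with hgt | hle
    · exact hπz j hgt
    · have : j = 0 := by omega
      rw [this, hπ0]
  -- the discrepancy
  set h : ℕ → ℝ := fun l => F l - ptil l with hh
  set dd : ℕ → ℝ := fun j => ∑ l ∈ range L, Tri j l * h l with hdd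
  set cc : ℕ → ℝ := fun j => ∑ l ∈ range L, (Tri j l)^2 with hcc
  have hPsihat : Psi ptil πhat = (1/2) * ∑ i ∈ range L, F i ^ 2 - ∑ i ∈ range L, F i * ptil i := by
    rw [psi_eq_crit ptil πhat (Finset.Icc 1 L) hπout]
    exact crit_eq_sum ptil F L hFz
  -- perturbation identity
  have hperturb : ∀ j ∈ Finset.Icc 1 L, ∀ t : ℝ,
      Psi ptil (fun j' => πhat j' + t * (if j' = j then 1 else 0))
        = Psi ptil πhat + t * dd j + t^2/2 * cc j := by
    intro j hj t
    obtain ⟨hj1, hjL⟩ := Finset.mem_Icc.mp hj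
    set μt : ℕ → ℝ := fun j' => πhat j' + t * (if j' = j then 1 else 0) with hμt
    have hμout : ∀ j' ∉ Finset.Icc 1 L, μt j' = 0 := by
      intro j' hj'
      have hne : j' ≠ j := by intro he; exact hj' (he ▸ hj)
      simp only [hμt, if_neg hne, mul_zero, add_zero]
      exact hπout j' hj'
    have hfeq : (fun i => ∑ j' ∈ Finset.Icc 1 L, μt j' * Tri j' i)
        = fun i => F i + t * Tri j i := by
      funext i
      have : ∀ j' ∈ Finset.Icc 1 L, μt j' * Tri j' i
          = πhat j' * Tri j' i + (if j' = j then t * Tri j' i else 0) := by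
        intro j' _
        simp only [hμt]
        split <;> ring
      rw [Finset.sum_congr rfl this, Finset.sum_add_distrib, Finset.sum_ite_eq' (Finset.Icc 1 L)]
      rw [if_pos hj]
    have hgz : ∀ i, L ≤ i → F i + t * Tri j i = 0 := by
      intro i hi
      rw [hFz i hi, tri_zero (le_trans hjL hi), mul_zero, add_zero]
    rw [psi_eq_crit ptil μt (Finset.Icc 1 L) hμout, hfeq,
        crit_eq_sum ptil _ L hgz, hPsihat]
    have e1 : ∑ i ∈ range L, (F i + t * Tri j i) ^ 2
        = ∑ i ∈ range L, F i ^ 2 + (2*t) * ∑ i ∈ range L, (Tri j i * F i)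
          + t^2 * ∑ i ∈ range L, (Tri j i)^2 := by
      rw [Finset.mul_sum, Finset.mul_sum, ← Finset.sum_add_distrib, ← Finset.sum_add_distrib]
      exact Finset.sum_congr rfl fun i _ => by ring
    have e2 : ∑ i ∈ range L, (F i + t * Tri j i) * ptil i
        = ∑ i ∈ range L, F i * ptil i + t * ∑ i ∈ range L, (Tri j i * ptil i) := by
      rw [Finset.mul_sum, ← Finset.sum_add_distrib]
      exact Finset.sum_congr rfl fun i _ => by ring
    have e3 : dd j = ∑ i ∈ range L, (Tri j i * F i) - ∑ i ∈ range L, (Tri j i * ptil i) := by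
      rw [hdd, ← Finset.sum_sub_distrib]
      exact Finset.sum_congr rfl fun i _ => by simp only [hh]; ring
    rw [e1, e2, e3, hcc]
    ring
  -- membership of perturbations
  have hμmem : ∀ j ∈ Finset.Icc 1 L, ∀ t : ℝ, -πhat j ≤ t →
      MemML L (fun j' => πhat j' + t * (if j' = j then 1 else 0)) := by
    intro j hj t ht
    obtain ⟨hj1, hjL⟩ := Finset.mem_Icc.mp hj
    refine ⟨?_, ?_, ?_⟩
    · have : (0:ℕ) ≠ j := by omega
      simp [hπ0, this]
    · intro j'
      by_cases he : j' = j
      · subst he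
        show 0 ≤ πhat j' + t * if j' = j' then 1 else 0
        have h1 : (if j' = j' then (1:ℝ) else 0) = 1 := if_pos rfl
        rw [h1, mul_one]
        linarith
      · simp only [if_neg he, mul_zero, add_zero]
        exact hπnn j'
    · intro j' hj'
      have he : j' ≠ j := by omega
      simp only [if_neg he, mul_zero, add_zero]
      exact hπz j' hj'
  -- positivity of cc
  have hccpos : ∀ j ∈ Finset.Icc 1 L, 0 < cc j := by
    intro j hj
    obtain ⟨hj1, hjL⟩ := Finset.mem_Icc.mp hj
    have h0 : 0 < (Tri j 0)^2 := by
      have : 0 < Tri j 0 := by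
        rw [tri_eq j 0 (by omega)]
        have hjr : (1:ℝ) ≤ (j:ℝ) := by exact_mod_cast hj1
        rw [Nat.cast_zero, sub_zero]
        have h2 : (0:ℝ) < (j:ℝ) * ((j:ℝ)+1) := by positivity
        positivity
      positivity
    have hle : (Tri j 0)^2 ≤ cc j := by
      apply Finset.single_le_sum (f := fun l => (Tri j l)^2)
      · intro l _; exact sq_nonneg _
      · exact Finset.mem_range.mpr (by omega)
    linarith
  -- KKT: nonnegativity of dd
  have hddnn : ∀ j ∈ Finset.Icc 1 L, 0 ≤ dd j := by
    intro j hj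
    by_contra hneg
    push_neg at hneg
    have hc := hccpos j hj
    set t : ℝ := -dd j / cc j with htdef
    have htpos : 0 < t := div_pos (by linarith) hc
    have hmem' := hμmem j hj t (by linarith [hπnn j])
    have := hmin _ hmem'
    rw [hperturb j hj t] at this
    have hq : 0 ≤ t * dd j + t^2/2 * cc j := by linarith
    have heval : t * dd j + t^2/2 * cc j = -(dd j)^2 / (2 * cc j) := by
      rw [htdef]
      field_simp
      ring
    rw [heval] at hq
    have h2 : 0 < dd j ^ 2 := by nlinarith
    have h3 : -dd j ^ 2 / (2 * cc j) < 0 := div_neg_of_neg_of_pos (by linarith) (by linarith)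
    linarith
  -- complementary slackness
  have hcs : ∀ j ∈ Finset.Icc 1 L, πhat j * dd j = 0 := by
    intro j hj
    rcases eq_or_lt_of_le (hπnn j) with he | hpos
    · rw [← he, zero_mul]
    have hdz : dd j = 0 := by
      refine le_antisymm ?_ (hddnn j hj)
      by_contra hdp
      push_neg at hdp
      have hc := hccpos j hj
      set m : ℝ := min (πhat j) (dd j / cc j) with hm
      have hmpos : 0 < m := lt_min hpos (by positivity)
      have hmc : m * cc j ≤ dd j := by
        rw [← le_div_iff₀ hc]
        exact min_le_right _ _
      have hmem' := hμmem j hj (-m) (by have := min_le_left (πhat j) (dd j / cc j); linarith)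
      have := hmin _ hmem'
      rw [hperturb j hj (-m)] at this
      have hq : 0 ≤ -m * dd j + m^2/2 * cc j := by nlinarith
      nlinarith [mul_le_mul_of_nonneg_left hmc hmpos.le]
    rw [hdz, mul_zero]
  -- moments
  have htriL : ∀ j ∈ Finset.Icc 1 L, ∑ l ∈ range L, Tri j l = 1 := by
    intro j hj
    obtain ⟨hj1, hjL⟩ := Finset.mem_Icc.mp hj
    rw [← Finset.sum_subset (Finset.range_subset_range.mpr hjL)
      (fun l _ hl => tri_zero (le_of_not_gt (by simpa using hl)))]
    exact tri_sum hj1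
  have hFsum : ∑ l ∈ range L, F l = 1 := by
    rw [hF]
    rw [Finset.sum_comm]
    rw [show ∑ j ∈ Finset.Icc 1 L, ∑ l ∈ range L, πhat j * Tri j l
        = ∑ j ∈ Finset.Icc 1 L, πhat j * ∑ l ∈ range L, Tri j l from
      Finset.sum_congr rfl fun j _ => (Finset.mul_sum _ _ _).symm]
    rw [Finset.sum_congr rfl fun j hj => by rw [htriL j hj, mul_one]]
    exact hprob
  have hpsumL : ∑ l ∈ range L, ptil l = 1 := by
    rw [← hpsum]
    exact (tsum_eq_sum (fun i hi => hpz i (le_of_not_gt (by simpa using hi)))).symm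
  have hS0 : ∑ l ∈ range L, h l = 0 := by
    simp only [hh]
    rw [Finset.sum_sub_distrib, hFsum, hpsumL, sub_self]
  -- h vanishes from L on
  have hhz : ∀ l, L ≤ l → h l = 0 := by
    intro l hl
    simp only [hh]
    rw [hFz l hl, hpz l hl, sub_self]
  -- G nonneg
  have hGdd : ∀ k ∈ Finset.Icc 1 L,
      ∑ m ∈ range k, ∑ l ∈ range (m+1), h l = ((k:ℝ) * ((k:ℝ)+1) / 2) * dd k := by
    intro k hk
    obtain ⟨hk1, hkL⟩ := Finset.mem_Icc.mp hk
    have hkr : (1:ℝ) ≤ (k:ℝ) := by exact_mod_cast hk1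
    have hkk : (0:ℝ) < (k:ℝ) * ((k:ℝ)+1) := by positivity
    rw [gsum_eq]
    have e1 : dd k = ∑ l ∈ range k, Tri k l * h l := by
      rw [hdd]
      refine (Finset.sum_subset (Finset.range_subset_range.mpr hkL) ?_).symm
      intro l _ hl
      rw [tri_zero (le_of_not_gt (by simpa using hl)), zero_mul]
    have e2 : dd k = (2 / ((k:ℝ) * ((k:ℝ)+1))) * ∑ l ∈ range k, ((k:ℝ) - l) * h l := by
      rw [e1, Finset.mul_sum]
      refine Finset.sum_congr rfl fun l hl => ?_
      rw [tri_eq k l (Finset.mem_range.mp hl)]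
      ring
    rw [e2]
    field_simp
  have hGnn : ∀ k, 0 ≤ ∑ m ∈ range k, ∑ l ∈ range (m+1), h l := by
    have hbase : ∀ k, k ≤ L → 0 ≤ ∑ m ∈ range k, ∑ l ∈ range (m+1), h l := by
      intro k hkL
      rcases Nat.eq_zero_or_pos k with hk0 | hk1
      · subst hk0; simp
      have hk : k ∈ Finset.Icc 1 L := Finset.mem_Icc.mpr ⟨hk1, hkL⟩
      rw [hGdd k hk]
      have hkr : (1:ℝ) ≤ (k:ℝ) := by exact_mod_cast hk1
      have := hddnn k hk
      have hpos : (0:ℝ) < (k:ℝ) * ((k:ℝ)+1) / 2 := by positivity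
      positivity
    intro k
    rcases le_or_gt k L with hkL | hLk
    · exact hbase k hkL
    · have key : ∀ k, L ≤ k → ∑ m ∈ range k, ∑ l ∈ range (m+1), h l
          = ∑ m ∈ range L, ∑ l ∈ range (m+1), h l := by
        intro k hk
        induction k, hk using Nat.le_induction with
        | base => rfl
        | succ n hn ih =>
          rw [Finset.sum_range_succ, ih]
          have : ∑ l ∈ range (n+1), h l = 0 := by
            rw [← Finset.sum_subset (Finset.range_subset_range.mpr (by omega : L ≤ n+1))
              (fun l _ hl => hhz l (le_of_not_gt (by simpa using hl)))]
            exact hS0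
          rw [this, add_zero]
      rw [key k hLk.le]
      exact hbase L le_rfl
  -- orthogonality
  have hFh : ∑ l ∈ range L, h l * F l = 0 := by
    have e1 : ∑ l ∈ range L, h l * F l
        = ∑ l ∈ range L, ∑ j ∈ Finset.Icc 1 L, πhat j * (Tri j l * h l) := by
      refine Finset.sum_congr rfl fun l _ => ?_
      rw [hF]
      simp only []
      rw [Finset.mul_sum]
      exact Finset.sum_congr rfl fun j _ => by ring
    rw [e1, Finset.sum_comm]
    apply Finset.sum_eq_zero
    intro j hj
    rw [← Finset.mul_sum]
    have : ∑ l ∈ range L, Tri j l * h l = dd j := rfl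
    rw [this]
    exact hcs j hj
  -- final comparison
  intro g hg hg2
  have hhg : 0 ≤ ∑ l ∈ range L, h l * g l := key_ineq h g L hS0 hGnn hg
  have hCg : Crit ptil g = (1/2) * ∑' i, g i ^ 2 - ∑ l ∈ range L, g l * ptil l := by
    unfold Crit
    have e : ∑' i, g i * ptil i = ∑ l ∈ range L, g l * ptil l :=
      tsum_eq_sum (fun i hi => by rw [hpz i (le_of_not_gt (by simpa using hi)), mul_zero])
    rw [e]
  have hCF : Crit ptil F = (1/2) * ∑ i ∈ range L, F i ^ 2 - ∑ i ∈ range L, F i * ptil i :=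
    crit_eq_sum ptil F L hFz
  have hBC : ∑ i ∈ range L, F i * ptil i = ∑ i ∈ range L, F i ^ 2 := by
    have e : ∑ l ∈ range L, h l * F l
        = ∑ l ∈ range L, F l ^ 2 - ∑ l ∈ range L, F l * ptil l := by
      rw [← Finset.sum_sub_distrib]
      refine Finset.sum_congr rfl fun l _ => ?_
      simp only [hh]
      ring
    rw [hFh] at e
    linarith
  have hSgA : ∑ l ∈ range L, g l ^ 2 ≤ ∑' i, g i ^ 2 :=
    Summable.sum_le_tsum (range L) (fun i _ => sq_nonneg _) hg2
  have hFg : ∑ l ∈ range L, F l * g l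
      ≤ (1/2) * ∑ l ∈ range L, F l ^ 2 + (1/2) * ∑ l ∈ range L, g l ^ 2 := by
    rw [Finset.mul_sum, Finset.mul_sum, ← Finset.sum_add_distrib]
    refine Finset.sum_le_sum fun l _ => ?_
    nlinarith [sq_nonneg (F l - g l)]
  have hsplit : ∑ l ∈ range L, h l * g l
      = ∑ l ∈ range L, F l * g l - ∑ l ∈ range L, g l * ptil l := by
    rw [← Finset.sum_sub_distrib]
    refine Finset.sum_congr rfl fun l _ => ?_
    simp only [hh]
    ring
  rw [hCg, hCF]
  rw [hsplit] at hhg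
  linarith

end AuxProof

set_option maxHeartbeats 2000000

/-- Theorem 6: if `L ≥ s̃ + 1` and the minimizer `π̂^L` of `Ψ` over `ℳ^L` is a
probability measure, then `π̂^L` minimizes `Ψ` over all finitely supported nonnegative
measures, and it is the mixing measure of the constrained LSE `p̂`:
`p̂(i) = ∑_{j≥i+1} π̂^L_j T_j(i)` for all `i`. -/
theorem stmt_19 (ptil : ℕ → ℝ) (hptil : IsFinPMF ptil)
    (stil : ℕ) (hstil : IsMaxSupport ptil stil)
    (L : ℕ) (hL : stil + 1 ≤ L)
    (πhat : ℕ → ℝ) (hmem : MemML L πhat)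
    (hmin : ∀ μ : ℕ → ℝ, MemML L μ → Psi ptil πhat ≤ Psi ptil μ)
    (hprob : ∑ j ∈ Finset.Icc 1 L, πhat j = 1)
    (phat : ℕ → ℝ) (hphatK : MemK phat)
    (hphat2 : Summable (fun i => (phat i) ^ 2))
    (hqmin : ∀ f : ℕ → ℝ, MemK f → Summable (fun i => (f i) ^ 2) →
      Crit ptil phat ≤ Crit ptil f) :
    (∀ π : ℕ → ℝ, π 0 = 0 → (∀ j, 0 ≤ π j) → (Function.support π).Finite →
      Psi ptil πhat ≤ Psi ptil π) ∧
    (∀ i : ℕ, phat i = ∑' j : ℕ, πhat j * Tri j i) := by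
  obtain ⟨hπ0, hπnn, hπz⟩ := hmem
  set F : ℕ → ℝ := fun i => ∑ j ∈ Finset.Icc 1 L, πhat j * Tri j i with hF
  have hπout : ∀ j ∉ Finset.Icc 1 L, πhat j = 0 := by
    intro j hj
    rw [Finset.mem_Icc] at hj
    rcases Nat.lt_or_ge L j with hgt | hle
    · exact hπz j hgt
    · have : j = 0 := by omega
      rw [this, hπ0]
  have hpz : ∀ i, L ≤ i → ptil i = 0 := by
    intro i hi
    by_contra hne
    have := hstil.2 i hne
    omega
  have hFz : ∀ i, L ≤ i → F i = 0 := by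
    intro i hi
    apply Finset.sum_eq_zero
    intro j hj
    rw [tri_zero (le_trans (Finset.mem_Icc.mp hj).2 hi), mul_zero]
  have QFmin := Fmin ptil hptil.2.2 stil hstil L hL πhat ⟨hπ0, hπnn, hπz⟩ hmin hprob
  have hFK : MemK F := mix_memK (Finset.Icc 1 L) πhat hπnn
  have hF2 : Summable (fun i => F i ^ 2) := mix_sq_summable (Finset.Icc 1 L) πhat
  -- Crit F = Crit phat
  have e1 : Crit ptil F ≤ Crit ptil phat := QFmin phat hphatK hphat2
  have e2 : Crit ptil phat ≤ Crit ptil F := hqmin F hFK hF2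
  have heq : Crit ptil F = Crit ptil phat := le_antisymm e1 e2
  -- midpoint
  set m : ℕ → ℝ := fun i => (F i + phat i) / 2 with hm
  have hmK : MemK m := by
    refine ⟨?_, ?_, ?_⟩
    · intro i
      have h1 := hFK.1 i
      have h2 := hphatK.1 i
      simp only [hm]
      linarith
    · intro i
      have h1 := hFK.2.1 i
      have h2 := hphatK.2.1 i
      simp only [hm]
      linarith
    · have ht : Filter.Tendsto (fun i => (F i + phat i)/2) Filter.atTop (nhds ((0+0)/2)) :=
        (hFK.2.2.add hphatK.2.2).div_const 2
      norm_num at ht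
      exact ht
  have hm2 : Summable (fun i => m i ^ 2) := by
    refine Summable.of_nonneg_of_le (fun i => sq_nonneg _) ?_ (hF2.add hphat2)
    intro i
    simp only [hm]
    nlinarith [sq_nonneg (F i - phat i)]
  have hFp_summ : Summable (fun i => F i * phat i) := by
    apply summable_of_ne_finset_zero (s := Finset.range L)
    intro i hi
    rw [hFz i (le_of_not_gt (by simpa using hi)), zero_mul]
  have hFp2_summ : Summable (fun i => F i * ptil i) := by
    apply summable_of_ne_finset_zero (s := Finset.range L)
    intro i hi
    rw [hFz i (le_of_not_gt (by simpa using hi)), zero_mul]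
  have hpp_summ : Summable (fun i => phat i * ptil i) := by
    apply summable_of_ne_finset_zero (s := Finset.range L)
    intro i hi
    rw [hpz i (le_of_not_gt (by simpa using hi)), mul_zero]
  have hD_summ : Summable (fun i => (F i - phat i) ^ 2) := by
    apply Summable.congr ((hF2.add hphat2).sub (hFp_summ.mul_left 2))
    intro i
    ring
  -- tsum identities
  have t1 : ∑' i, m i ^ 2
      = (1/4) * ∑' i, F i ^ 2 + ((1/2) * ∑' i, F i * phat i + (1/4) * ∑' i, phat i ^ 2) := by
    rw [← tsum_mul_left, ← tsum_mul_left, ← tsum_mul_left,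
        ← Summable.tsum_add (hFp_summ.mul_left _) (hphat2.mul_left _),
        ← Summable.tsum_add (hF2.mul_left _) (((hFp_summ.mul_left _)).add (hphat2.mul_left _))]
    exact tsum_congr fun i => by simp only [hm]; ring
  have t2 : ∑' i, m i * ptil i
      = (1/2) * ∑' i, F i * ptil i + (1/2) * ∑' i, phat i * ptil i := by
    rw [← tsum_mul_left, ← tsum_mul_left,
        ← Summable.tsum_add (hFp2_summ.mul_left _) (hpp_summ.mul_left _)]
    exact tsum_congr fun i => by simp only [hm]; ring
  have t3 : ∑' i, (F i - phat i) ^ 2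
      = ∑' i, F i ^ 2 - 2 * ∑' i, F i * phat i + ∑' i, phat i ^ 2 := by
    rw [← tsum_mul_left,
        ← Summable.tsum_sub hF2 (hFp_summ.mul_left 2),
        ← Summable.tsum_add (hF2.sub (hFp_summ.mul_left 2)) hphat2]
    exact tsum_congr fun i => by ring
  have hkey : Crit ptil m
      = (1/2) * Crit ptil F + (1/2) * Crit ptil phat - (1/8) * ∑' i, (F i - phat i) ^ 2 := by
    unfold Crit
    rw [t1, t2, t3]
    ring
  have hCm : Crit ptil phat ≤ Crit ptil m := hqmin m hmK hm2
  have hDle : ∑' i, (F i - phat i) ^ 2 ≤ 0 := by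
    rw [hkey, ← heq] at hCm
    linarith
  have hFeq : ∀ i, F i = phat i := by
    intro i
    have h1 : (F i - phat i) ^ 2 ≤ 0 :=
      le_trans (Summable.le_tsum hD_summ i (fun j _ => sq_nonneg _)) hDle
    have h2 : (F i - phat i) ^ 2 = 0 := le_antisymm h1 (sq_nonneg _)
    have := pow_eq_zero_iff (n := 2) (by norm_num) |>.mp h2
    linarith [sub_eq_zero.mp this]
  constructor
  · intro π hp0 hpnn hpfin
    set s : Finset ℕ := hpfin.toFinset with hs
    have hout : ∀ j ∉ s, π j = 0 := by
      intro j hj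
      by_contra hne
      exact hj (hpfin.mem_toFinset.mpr hne)
    rw [psi_eq_crit ptil π s hout, psi_eq_crit ptil πhat (Finset.Icc 1 L) hπout]
    exact QFmin _ (mix_memK s π hpnn) (mix_sq_summable s π)
  · intro i
    have : ∑' j, πhat j * Tri j i = F i :=
      tsum_eq_sum (fun j hj => by rw [hπout j hj, zero_mul])
    rw [this]
    exact (hFeq i).symm
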